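/- Let D be a convex polytope and b: D → D an affine automorphism such that for every proper face τ of D, either b(τ) = τ or τ ∩ b(τ) = ∅, and b is induced from an automorphism of a permutohedron P^{q−1} permuting the coordinate axes, with D a face of P^{q−1}. If additionally there is a face τ̂ of D with b(τ̂) = τ̂ pointwise fixed, then b is the identity on D. (Special case: any coordinate-permutation automorphism of the permutohedron restricted to faces containing a fixed face and preserving each such face is the identity.) -/

import Mathlib

/-- The points `P_π = (π(1), ..., π(q))`. -/
def permutoPoints (q : ℕ) : Set (Fin q → ℝ) :=
  {x | ∃ π : Equiv.Perm (Fin q), ∀ i, x i = (π i : ℕ) + 1}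

/-- The permutohedron of order `q` in `ℝ^q`. -/
noncomputable def permutohedron (q : ℕ) : Set (Fin q → ℝ) :=
  convexHull ℝ (permutoPoints q)

/-- The set of maximizers in `C` of the linear functional `x ↦ ∑ i, lam i * x i`. -/
def maxSet {q : ℕ} (C : Set (Fin q → ℝ)) (lam : Fin q → ℝ) : Set (Fin q → ℝ) :=
  {x ∈ C | ∀ y ∈ C, ∑ i, lam i * y i ≤ ∑ i, lam i * x i}

/-- `F` is a face of the convex set `C`. -/
def IsFace {q : ℕ} (C F : Set (Fin q → ℝ)) : Prop :=
  ∃ lam : Fin q → ℝ, F = maxSet C lam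

/-- The action of a permutation `σ ∈ Σ_q` on `ℝ^q` by permuting the coordinate axes. -/
def permAct {q : ℕ} (σ : Equiv.Perm (Fin q)) (x : Fin q → ℝ) : Fin q → ℝ :=
  fun i => x (σ⁻¹ i)



/-- Auxiliary: the maximizer set of a linear functional is an extreme subset. -/
lemma isExtreme_maxSet {q : ℕ} (C : Set (Fin q → ℝ)) (lam : Fin q → ℝ) :
    IsExtreme ℝ C (maxSet C lam) := by
  constructor
  · exact fun x hx => hx.1
  · rintro x1 hx1 x2 hx2 x ⟨hxC, hmax⟩ ⟨a, b, ha, hb, hab, hx⟩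
    have key : ∀ z : Fin q → ℝ, (∑ i, lam i * (a • x1 + b • x2) i)
        = a * (∑ i, lam i * x1 i) + b * (∑ i, lam i * x2 i) := by
      intro z
      have : ∀ i ∈ Finset.univ, lam i * (a • x1 + b • x2) i
          = a * (lam i * x1 i) + b * (lam i * x2 i) := by
        intro i _; simp [smul_eq_mul]; ring
      rw [Finset.sum_congr rfl this, Finset.sum_add_distrib,
        ← Finset.mul_sum, ← Finset.mul_sum]
    have h1 : ∑ i, lam i * x1 i ≤ ∑ i, lam i * x i := hmax x1 hx1
    have h2 : ∑ i, lam i * x2 i ≤ ∑ i, lam i * x i := hmax x2 hx2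
    have heq : a * (∑ i, lam i * x1 i) + b * (∑ i, lam i * x2 i) = ∑ i, lam i * x i := by
      rw [← key 0, hx]
    have hS : a * (∑ i, lam i * x i) + b * (∑ i, lam i * x i) = ∑ i, lam i * x i := by
      rw [← add_mul, hab, one_mul]
    have e1 : ∑ i, lam i * x1 i = ∑ i, lam i * x i :=
      mul_left_cancel₀ ha.ne' (le_antisymm (mul_le_mul_of_nonneg_left h1 ha.le)
        (by linarith [mul_le_mul_of_nonneg_left h2 hb.le, hS]))
    have e2 : ∑ i, lam i * x2 i = ∑ i, lam i * x i :=
      mul_left_cancel₀ hb.ne' (le_antisymm (mul_le_mul_of_nonneg_left h2 hb.le)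
        (by linarith [mul_le_mul_of_nonneg_left h1 ha.le, hS]))
    exact ⟨hx1, fun y hy => e1 ▸ hmax y hy⟩

lemma maxSet_closed {q : ℕ} (C : Set (Fin q → ℝ)) (lam : Fin q → ℝ) (hC : IsClosed C) :
    IsClosed (maxSet C lam) := by
  have hcont : Continuous fun x : Fin q → ℝ => ∑ i, lam i * x i :=
    continuous_finset_sum _ fun i _ => continuous_const.mul (continuous_apply i)
  have : maxSet C lam = C ∩ ⋂ y ∈ C, {x | ∑ i, lam i * y i ≤ ∑ i, lam i * x i} := by
    ext x; simp [maxSet, Set.mem_iInter]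
  rw [this]
  exact hC.inter (isClosed_biInter fun y _ => isClosed_le continuous_const hcont)


/-- Let `b` be the automorphism of a face `D` of the permutohedron `P^{q−1}` induced by a
coordinate-permutation `σ`, mapping `D` onto itself, and such that every proper face `τ` of `D`
satisfies `b(τ) = τ` or `τ ∩ b(τ) = ∅`. If some face `τ̂` of `D` is pointwise fixed by `b`,
then `b` is the identity on `D`. -/
theorem perm_automorphism_fixing_face_is_identity (q : ℕ) (σ : Equiv.Perm (Fin q))
    (D τhat : Set (Fin q → ℝ))
    (hD : IsFace (permutohedron q) D)
    (hσD : permAct σ '' D = D)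
    (hfaces : ∀ τ : Set (Fin q → ℝ), IsFace D τ → τ ≠ D →
      (permAct σ '' τ = τ ∨ (permAct σ '' τ) ∩ τ = ∅))
    (hτ : IsFace D τhat) (hne : τhat.Nonempty)
    (hfix : ∀ x ∈ τhat, permAct σ x = x) :
    ∀ x ∈ D, permAct σ x = x := by
  obtain ⟨lamD, rfl⟩ := hD
  obtain ⟨lam, rfl⟩ := hτ
  -- permutoPoints is finite
  have hfin : (permutoPoints q).Finite := by
    have : permutoPoints q ⊆ Set.range
        (fun π : Equiv.Perm (Fin q) => fun i => ((π i : ℕ) : ℝ) + 1) := by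
      rintro x ⟨π, hπ⟩; exact ⟨π, by funext i; exact (hπ i).symm⟩
    exact (Set.finite_range _).subset this
  have hPcomp : IsCompact (permutohedron q) := hfin.isCompact_convexHull ℝ
  have hPclosed : IsClosed (permutohedron q) := hPcomp.isClosed
  have hDclosed : IsClosed (maxSet (permutohedron q) lamD) := maxSet_closed _ _ hPclosed
  have hτclosed : IsClosed (maxSet (maxSet (permutohedron q) lamD) lam) :=
    maxSet_closed _ _ hDclosed
  have hτcomp : IsCompact (maxSet (maxSet (permutohedron q) lamD) lam) :=
    hPcomp.of_isClosed_subset hτclosed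
      (fun x hx => hx.1.1)
  obtain ⟨v, hv⟩ := hτcomp.extremePoints_nonempty hne
  have hext : IsExtreme ℝ (permutohedron q) (maxSet (maxSet (permutohedron q) lamD) lam) :=
    (isExtreme_maxSet _ lamD).trans (isExtreme_maxSet _ lam)
  have hvP : v ∈ permutoPoints q :=
    extremePoints_convexHull_subset (hext.extremePoints_subset_extremePoints hv)
  obtain ⟨π, hπ⟩ := hvP
  have hvinj : Function.Injective v := by
    intro i j hij
    rw [hπ i, hπ j] at hij
    have : ((π i : ℕ) : ℝ) = ((π j : ℕ) : ℝ) := by linarith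
    exact π.injective (Fin.val_injective (Nat.cast_injective this))
  have hσ1 : ∀ i, σ⁻¹ i = i := by
    intro i
    have := congrFun (hfix v hv.1) i
    exact hvinj this
  intro x _
  funext i
  simp [permAct, hσ1 i]
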